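/- For every integer n ≥ 1, the expected total oracle complexity satisfies E[ TOC(min{T, n}) ] ≤ n · Σ_{l=1}^{n} min{ 1, n·(q/p)^{l} + c·(2q)^{l} } · oc(ᾱ·γ^{l}) + n · oc(ᾱ). -/

import Mathlib

open MeasureTheory ProbabilityTheory

section StmtAux
variable {γ ᾱ : ℝ}

private lemma stmt9_grow_eq (hγ0 : 0 < γ) (hγ1 : γ < 1) (hᾱ : 0 < ᾱ)
    {αmax : ℝ} {j' : ℤ} (hαmax : αmax = ᾱ * γ ^ j') (L : ℤ) :
    min αmax (γ⁻¹ * (ᾱ * γ ^ L)) = ᾱ * γ ^ (max j' (L - 1)) := by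
  have h1 : γ⁻¹ * (ᾱ * γ ^ L) = ᾱ * γ ^ (L - 1) := by
    rw [zpow_sub_one₀ (ne_of_gt hγ0)]
    ring
  rw [h1, hαmax]
  rcases le_total j' (L - 1) with hle | hle
  · rw [max_eq_right hle, min_eq_right]
    exact mul_le_mul_of_nonneg_left (zpow_le_zpow_right_of_le_one₀ hγ0 hγ1.le hle) hᾱ.le
  · rw [max_eq_left hle, min_eq_left]
    exact mul_le_mul_of_nonneg_left (zpow_le_zpow_right_of_le_one₀ hγ0 hγ1.le hle) hᾱ.le

private lemma stmt9_lev_exists (hγ0 : 0 < γ) (hγ1 : γ < 1) (hᾱ : 0 < ᾱ)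
    {αmax : ℝ} {j' : ℤ} (hj' : j' ≤ 0) (hαmax : αmax = ᾱ * γ ^ j')
    {j : ℤ} (hj : j ≤ 0)
    (B : ℕ → ℝ) (hB0 : B 0 = ᾱ * γ ^ j)
    (hstep : ∀ k, B (k+1) = γ * B k ∨ B (k+1) = min αmax (γ⁻¹ * B k)) :
    ∀ k, ∃ L : ℤ, B k = ᾱ * γ ^ L ∧ L ≤ k := by
  intro k
  induction k with
  | zero => exact ⟨j, hB0, by exact_mod_cast hj⟩
  | succ k ih =>
    obtain ⟨L, hBL, hLk⟩ := ih
    rcases hstep k with h | h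
    · refine ⟨L + 1, ?_, by push_cast; omega⟩
      rw [h, hBL, zpow_add_one₀ (ne_of_gt hγ0)]
      ring
    · refine ⟨max j' (L - 1), ?_, ?_⟩
      · rw [h, hBL, stmt9_grow_eq hγ0 hγ1 hᾱ hαmax]
      · rw [max_le_iff]
        constructor
        · push_cast; omega
        · push_cast; omega

private lemma stmt9_ge_of_nonpos (hγ0 : 0 < γ) (hγ1 : γ < 1) (hᾱ : 0 < ᾱ)
    {L : ℤ} (hL : L ≤ 0) : ᾱ ≤ ᾱ * γ ^ L := by
  nth_rewrite 1 [← mul_one ᾱ]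
  refine mul_le_mul_of_nonneg_left ?_ hᾱ.le
  simpa using zpow_le_zpow_right_of_le_one₀ hγ0 hγ1.le hL

private lemma stmt9_lt_of_pos (hγ0 : 0 < γ) (hγ1 : γ < 1) (hᾱ : 0 < ᾱ)
    {L : ℤ} (hL : 1 ≤ L) : ᾱ * γ ^ L < ᾱ := by
  nth_rewrite 2 [← mul_one ᾱ]
  exact mul_lt_mul_of_pos_left (zpow_lt_one₀ hγ0 hγ1 (by omega)) hᾱ

private lemma stmt9_inj (hγ0 : 0 < γ) (hγ1 : γ < 1) (hᾱ : 0 < ᾱ)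
    {L M : ℤ} (h : ᾱ * γ ^ L = ᾱ * γ ^ M) : L = M := by
  have := mul_left_cancel₀ (ne_of_gt hᾱ) h
  exact (zpow_right_strictAnti₀ hγ0 hγ1).injective this

private noncomputable def stmt9w (γ ᾱ ρ : ℝ) : ℝ → ℝ :=
  fun a => if a < ᾱ then Real.exp (Real.log (a/ᾱ) * (Real.log ρ / Real.log γ)) else 0

private lemma stmt9w_meas (γ ᾱ ρ : ℝ) : Measurable (stmt9w γ ᾱ ρ) := by
  unfold stmt9w
  refine Measurable.ite (measurableSet_lt measurable_id measurable_const) ?_ measurable_const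
  exact Real.measurable_exp.comp ((Real.measurable_log.comp (measurable_id.div_const ᾱ)).mul_const _)

private lemma stmt9w_nonneg (γ ᾱ ρ : ℝ) (a : ℝ) : 0 ≤ stmt9w γ ᾱ ρ a := by
  unfold stmt9w
  split
  · exact (Real.exp_pos _).le
  · exact le_refl 0

private lemma stmt9w_eval {γ ᾱ ρ : ℝ} (hγ0 : 0 < γ) (hγ1 : γ < 1) (hᾱ : 0 < ᾱ)
    (hρ0 : 0 < ρ) (L : ℤ) :
    stmt9w γ ᾱ ρ (ᾱ * γ ^ L) = if 1 ≤ L then ρ ^ L else 0 := by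
  have hlogγ : Real.log γ ≠ 0 := ne_of_lt (Real.log_neg hγ0 hγ1)
  unfold stmt9w
  by_cases h : 1 ≤ L
  · rw [if_pos (stmt9_lt_of_pos hγ0 hγ1 hᾱ h), if_pos h]
    have h1 : (ᾱ * γ ^ L) / ᾱ = γ ^ L := by
      field_simp
    rw [h1, Real.log_zpow]
    have h2 : (L : ℝ) * Real.log γ * (Real.log ρ / Real.log γ) = Real.log ρ * L := by
      field_simp
    rw [h2, ← Real.rpow_def_of_pos hρ0, Real.rpow_intCast]
  · rw [if_neg (not_lt.2 (stmt9_ge_of_nonpos hγ0 hγ1 hᾱ (by omega))), if_neg h]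

private lemma stmt9_cond_bound
    {Ω : Type*} [mΩ : MeasurableSpace Ω] (μ : Measure Ω) [IsProbabilityMeasure μ]
    (F : Filtration ℕ mΩ) {p : ℝ} (k : ℕ)
    (Gk : Set Ω) (hGk : MeasurableSet Gk)
    (E : Set Ω)
    (hcond : ∀ᵐ x ∂μ, x ∈ E → p ≤ (μ[Set.indicator Gk (fun _ => (1:ℝ)) | F k]) x)
    (B : Set Ω) (hB : MeasurableSet[F k] B) (hBE : B ⊆ E) :
    p * (μ B).toReal ≤ (μ (B ∩ Gk)).toReal := by
  have hBm : MeasurableSet B := F.le k _ hB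
  have hint : Integrable (Set.indicator Gk fun _ => (1:ℝ)) μ := (integrable_const 1).indicator hGk
  have h1 := setIntegral_condExp (F.le k) hint hB
  have h2 : ∫ x in B, Set.indicator Gk (fun _ => (1:ℝ)) x ∂μ = (μ (B ∩ Gk)).toReal := by
    rw [setIntegral_indicator hGk]
    simp [Set.inter_comm, measureReal_def]
  have h3 : p * (μ B).toReal = ∫ _ in B, p ∂μ := by
    simp [mul_comm, measureReal_def]
  have h4 : ∫ _ in B, p ∂μ ≤ ∫ x in B, (μ[Set.indicator Gk (fun _ => (1:ℝ)) | F k]) x ∂μ := by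
    refine integral_mono_ae (integrable_const p) integrable_condExp.integrableOn ?_
    filter_upwards [ae_restrict_mem hBm, ae_restrict_of_ae hcond] with x hx1 hx2
    exact hx2 (hBE hx1)
  rw [h3]
  calc ∫ _ in B, p ∂μ ≤ _ := h4
  _ = _ := h1
  _ = _ := h2

private lemma stmt9_shrink_bound
    {Ω : Type*} [mΩ : MeasurableSpace Ω] (μ : Measure Ω) [IsProbabilityMeasure μ]
    {p : ℝ} (Gk Sk B : Set Ω) (hGk : MeasurableSet Gk) (hB : MeasurableSet B)
    (hdisj : B ∩ Sk ∩ Gk = ∅)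
    (hp : p * (μ B).toReal ≤ (μ (B ∩ Gk)).toReal) :
    (μ (B ∩ Sk)).toReal ≤ (1 - p) * (μ B).toReal ∧
      (μ (B ∩ Sk)).toReal + (μ (B ∩ Gk)).toReal ≤ (μ B).toReal := by
  have hdisj2 : Disjoint (B ∩ Sk) (B ∩ Gk) := by
    rw [Set.disjoint_iff_inter_eq_empty]
    rw [Set.eq_empty_iff_forall_notMem] at hdisj ⊢
    intro x hx
    exact hdisj x ⟨⟨hx.1.1, hx.1.2⟩, hx.2.2⟩
  have hsum : μ (B ∩ Sk) + μ (B ∩ Gk) ≤ μ B := by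
    rw [← measure_union hdisj2 (hB.inter hGk)]
    exact measure_mono (Set.union_subset Set.inter_subset_left Set.inter_subset_left)
  have h1 : (μ (B ∩ Sk)).toReal + (μ (B ∩ Gk)).toReal ≤ (μ B).toReal := by
    rw [← ENNReal.toReal_add (measure_ne_top μ _) (measure_ne_top μ _)]
    exact ENNReal.toReal_mono (measure_ne_top μ _) hsum
  exact ⟨by linarith, h1⟩

private lemma stmt9_meas_min {Ω : Type*} [mΩ : MeasurableSpace Ω]
    (T : Ω → ℕ) (hT : Measurable T) (f : ℕ → Ω → ℝ) (hf : ∀ i, Measurable (f i)) (k : ℕ) :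
    Measurable fun x => f (min (T x) k) x := by
  have heq : (fun x => f (min (T x) k) x)
      = fun x => ∑ i ∈ Finset.range (k+1), if min (T x) k = i then f i x else 0 := by
    funext x
    rw [Finset.sum_eq_single (min (T x) k)]
    · simp
    · intro b _ hb
      exact if_neg fun h => hb h.symm
    · intro h
      exact absurd (Finset.mem_range.2 (Nat.lt_succ_of_le (min_le_right _ _))) h
  rw [heq]
  refine Finset.measurable_sum _ fun i _ => Measurable.ite ?_ (hf i) measurable_const
  exact (hT.min measurable_const) (measurableSet_singleton i)

end StmtAux
set_option maxHeartbeats 1000000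

/-- Expected total oracle complexity bound:
`E[TOC(min{T,n})] ≤ n·Σ_{l=1}^{n} min{1, n·(q/p)^l + c·(2q)^l}·oc(ᾱ·γ^l) + n·oc(ᾱ)`. -/
theorem stmt_9
    {Ω : Type*} [mΩ : MeasurableSpace Ω] (μ : Measure Ω) [IsProbabilityMeasure μ]
    (F : Filtration ℕ mΩ)
    (γ ᾱ p q : ℝ) (hγ0 : 0 < γ) (hγ1 : γ < 1) (hᾱ : 0 < ᾱ)
    (hp : 1/2 < p) (hp1 : p < 1) (hq : q = 1 - p)
    (αmax : ℝ) (j' : ℤ) (hj' : j' ≤ 0) (hαmax : αmax = ᾱ * γ ^ j')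
    (A : ℕ → Ω → ℝ) (hadp : Adapted F A) (hpos : ∀ k x, 0 < A k x)
    (T : Ω → ℕ) (hT : IsStoppingTime F (fun ω => (T ω : WithTop ℕ)))
    (j : ℤ) (hj : j ≤ 0) (hA0 : ∀ x, A 0 x = ᾱ * γ ^ j)
    (hstep : ∀ k, ∀ᵐ x ∂μ,
      A (k+1) x = γ * A k x ∨ A (k+1) x = min αmax (γ⁻¹ * A k x))
    (hcond : ∀ k, ∀ᵐ x ∂μ, (k < T x ∧ A k x ≤ ᾱ) →
      p ≤ (μ[Set.indicator {x' | A (k+1) x' = min αmax (γ⁻¹ * A k x')}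
              (fun _ => (1:ℝ)) | F k]) x)
    (oc : ℝ → ℝ) (hoc0 : ∀ a, 0 < a → 0 ≤ oc a)
    (hocmono : ∀ a b, 0 < a → a ≤ b → oc b ≤ oc a)
    (n : ℕ) (hn : 1 ≤ n) :
    ∫ x, (∑ k ∈ Finset.Icc 1 (min (T x) n), oc (A k x)) ∂μ ≤
      (n : ℝ) * ∑ l ∈ Finset.Icc 1 n,
          (min 1 ((n : ℝ) * (q/p)^l
            + (2 * Real.sqrt (p*q) / (1 - 2 * Real.sqrt (p*q))^2) * (2*q)^l)) * oc (ᾱ * γ ^ l)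
        + (n : ℝ) * oc ᾱ := by
  classical
  -- basic arithmetic
  have hq0 : 0 < q := by rw [hq]; linarith
  have hp0 : 0 < p := by linarith
  have hqp : q < p := by rw [hq]; linarith
  set ρ : ℝ := p / q with hρdef
  have hρ1 : 1 < ρ := (one_lt_div hq0).2 hqp
  have hρ0 : 0 < ρ := lt_trans one_pos hρ1
  set w : ℝ → ℝ := stmt9w γ ᾱ ρ with hwdef
  have hwe : ∀ L : ℤ, w (ᾱ * γ ^ L) = if 1 ≤ L then ρ ^ L else 0 :=
    fun L => stmt9w_eval hγ0 hγ1 hᾱ hρ0 L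
  have hwnn : ∀ a, 0 ≤ w a := stmt9w_nonneg γ ᾱ ρ
  -- measurability of the data
  have hAm : ∀ k, Measurable (A k) := fun k => (hadp k).mono (F.le k) le_rfl
  have hTm : Measurable T := (measurable_of_countable (fun x : WithTop ℕ => WithTop.untopD 0 x)).comp (hT.measurable.mono hT.measurableSpace_le le_rfl)
  -- events
  set S : ℕ → Set Ω := fun k => {x | A (k+1) x = γ * A k x} with hSdef
  set G : ℕ → Set Ω := fun k => {x | A (k+1) x = min αmax (γ⁻¹ * A k x)} with hGdef
  set D : ℕ → ℕ → Set Ω := fun k L => {x | k < T x ∧ A k x = ᾱ * γ ^ (L:ℤ)} with hDdef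
  set E : ℕ → ℕ → Set Ω := fun k l => {x | k ≤ T x ∧ A k x = ᾱ * γ ^ (l:ℤ)} with hEdef
  have hSm : ∀ k, MeasurableSet (S k) := fun k =>
    measurableSet_eq_fun (hAm (k+1)) ((hAm k).const_mul γ)
  have hGm : ∀ k, MeasurableSet (G k) := fun k =>
    measurableSet_eq_fun (hAm (k+1)) (measurable_const.min ((hAm k).const_mul γ⁻¹))
  have hDmF : ∀ k L, MeasurableSet[F k] (D k L) := by
    intro k L
    have h1 : MeasurableSet[F k] {x | k < T x} := by
      have h2 : MeasurableSet[F k] {x | (T x : WithTop ℕ) ≤ k}ᶜ := (hT k).compl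
      have heq : {x | (T x : WithTop ℕ) ≤ k}ᶜ = {x | k < T x} := by ext x; simp [not_le]
      rwa [heq] at h2
    exact h1.inter (measurableSet_eq_fun (hadp k) measurable_const)
  have hDm : ∀ k L, MeasurableSet (D k L) := fun k L => F.le k _ (hDmF k L)
  have hEm : ∀ k l, MeasurableSet (E k l) := fun k l =>
    (measurableSet_le measurable_const hTm).inter (measurableSet_eq_fun (hAm k) measurable_const)
  -- the a.s. good event
  have hP : ∀ᵐ x ∂μ, ∀ k, A (k+1) x = γ * A k x ∨ A (k+1) x = min αmax (γ⁻¹ * A k x) :=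
    ae_all_iff.2 hstep
  have hlev : ∀ x, (∀ k, A (k+1) x = γ * A k x ∨ A (k+1) x = min αmax (γ⁻¹ * A k x)) →
      ∀ k, ∃ L : ℤ, A k x = ᾱ * γ ^ L ∧ L ≤ k := fun x hx =>
    stmt9_lev_exists hγ0 hγ1 hᾱ hj' hαmax hj (fun k => A k x) (hA0 x) hx
  -- shrink and grow events are incompatible below ᾱ
  have hSG : ∀ k x, A k x ≤ ᾱ → x ∈ S k → x ∈ G k → False := by
    intro k x hle hs hg
    have hAx := hpos k x
    have h1 : γ * A k x < A k x := by nlinarith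
    have h2 : A k x < γ⁻¹ * A k x := by
      rw [inv_mul_eq_div, lt_div_iff₀ hγ0]
      nlinarith
    have hαm : ᾱ ≤ αmax := by rw [hαmax]; exact stmt9_ge_of_nonpos hγ0 hγ1 hᾱ hj'
    have heq : γ * A k x = min αmax (γ⁻¹ * A k x) := by
      rw [← hs]; exact hg
    have hlt : γ * A k x < min αmax (γ⁻¹ * A k x) :=
      lt_min (lt_of_lt_of_le (lt_of_lt_of_le h1 hle) hαm) (lt_trans h1 h2)
    exact absurd heq (ne_of_lt hlt)
  -- the stopped weight process
  set U : ℕ → Ω → ℝ := fun k x => w (A (min (T x) k) x) with hUdef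
  have hUm : ∀ k, Measurable (U k) := fun k =>
    stmt9_meas_min T hTm (fun i x => w (A i x)) (fun i => (stmt9w_meas γ ᾱ ρ).comp (hAm i)) k
  have hUnn : ∀ k x, 0 ≤ U k x := fun k x => hwnn _
  have hUbd : ∀ k, ∀ᵐ x ∂μ, ‖U k x‖ ≤ ρ ^ (k:ℤ) := by
    intro k
    filter_upwards [hP] with x hx
    obtain ⟨L, hL1, hL2⟩ := hlev x hx (min (T x) k)
    rw [Real.norm_eq_abs, abs_of_nonneg (hUnn k x)]
    show w (A (min (T x) k) x) ≤ ρ ^ (k:ℤ)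
    rw [hL1, hwe L]
    split
    · refine zpow_le_zpow_right₀ hρ1.le (le_trans hL2 ?_)
      exact_mod_cast min_le_right (T x) k
    · positivity
  have hUint : ∀ k, Integrable (U k) μ := fun k =>
    Integrable.mono' (integrable_const _) (hUm k).aestronglyMeasurable (hUbd k)
  -- the key one-step estimate
  have hkey : ∀ k, ∫ x, U (k+1) x ∂μ ≤ (∫ x, U k x ∂μ) + 1 := by
    intro k
    set c1 : ℕ → ℝ := fun L => ρ ^ ((L:ℤ)+1) with hc1def
    set c2 : ℕ → ℝ := fun L => ρ ^ ((L:ℤ)-1) with hc2def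
    have hc1p : ∀ L, 0 < c1 L := fun L => zpow_pos hρ0 _
    have hc2p : ∀ L, 0 < c2 L := fun L => zpow_pos hρ0 _
    clear_value c1 c2
    set Tk : Set Ω := {x | T x ≤ k} with hTkdef
    have hTkm : MeasurableSet Tk := measurableSet_le hTm measurable_const
    set t : ℕ → Ω → ℝ := fun L x =>
      c1 L * Set.indicator (D k L ∩ S k) (fun _ => (1:ℝ)) x
        + c2 L * Set.indicator (D k L ∩ G k) (fun _ => (1:ℝ)) x with htdef
    have htnn : ∀ L x, 0 ≤ t L x := fun L x => add_nonneg
      (mul_nonneg (hc1p L).le (Set.indicator_nonneg (fun _ _ => zero_le_one) x))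
      (mul_nonneg (hc2p L).le (Set.indicator_nonneg (fun _ _ => zero_le_one) x))
    set V : Ω → ℝ := fun x => Set.indicator Tk (U k) x
      + ∑ L ∈ Finset.range (k+1), t L x with hVdef
    have hVnn : ∀ x, 0 ≤ V x := fun x => add_nonneg
      (Set.indicator_nonneg (fun y _ => hUnn k y) x)
      (Finset.sum_nonneg fun L _ => htnn L x)
    -- pointwise bound U (k+1) ≤ V a.e.
    have hUV : ∀ᵐ x ∂μ, U (k+1) x ≤ V x := by
      filter_upwards [hP] with x hx
      by_cases hxT : T x ≤ k
      · have e1 : min (T x) (k+1) = min (T x) k := by omega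
        have hz : ∀ L ∈ Finset.range (k+1), t L x = 0 := by
          intro L _
          rw [htdef]
          simp only
          rw [Set.indicator_of_notMem (fun hc => absurd hc.1.1 (by omega)),
            Set.indicator_of_notMem (fun hc => absurd hc.1.1 (by omega))]
          ring
        have hVx : V x = U k x := by
          rw [hVdef]
          simp only
          rw [Finset.sum_eq_zero hz, Set.indicator_of_mem (show x ∈ Tk from hxT), add_zero]
        have hUx : U (k+1) x = U k x := by
          show w (A (min (T x) (k+1)) x) = w (A (min (T x) k) x)
          rw [e1]
        rw [hUx, hVx]
      · have e1 : min (T x) (k+1) = k+1 := by omega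
        obtain ⟨L₀, hAx, hL₀k⟩ := hlev x hx k
        have hUx : U (k+1) x = w (A (k+1) x) := by
          show w (A (min (T x) (k+1)) x) = _
          rw [e1]
        have hconc : U (k+1) x = 0 ∨ (0 ≤ L₀ ∧ U (k+1) x ≤ t L₀.toNat x) := by
          rcases hx k with hsx | hgx
          · -- shrink step
            have hA1 : A (k+1) x = ᾱ * γ ^ (L₀+1) := by
              rw [hsx, hAx, zpow_add_one₀ (ne_of_gt hγ0)]
              ring
            rcases le_or_gt L₀ (-1) with hc | hc
            · exact Or.inl (by rw [hUx, hA1, hwe, if_neg (by omega)])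
            · have hm0 : (0:ℤ) ≤ L₀ := by omega
              refine Or.inr ⟨hm0, ?_⟩
              have hmL : (L₀.toNat:ℤ) = L₀ := Int.toNat_of_nonneg hm0
              have hxD : x ∈ D k L₀.toNat := by
                refine ⟨by omega, ?_⟩
                rw [hAx, hmL]
              have hU1 : U (k+1) x = c1 L₀.toNat := by
                rw [hUx, hA1, hwe, if_pos (by omega), hc1def]
                simp only
                rw [hmL]
              rw [hU1, htdef]
              simp only
              rw [Set.indicator_of_mem (Set.mem_inter hxD hsx), mul_one]
              have := mul_nonneg (hc2p L₀.toNat).le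
                (Set.indicator_nonneg (fun (_:Ω) _ => (zero_le_one (α := ℝ)))
                  (s := D k L₀.toNat ∩ G k) x)
              linarith
          · -- grow step
            have hA1 : A (k+1) x = ᾱ * γ ^ (max j' (L₀-1)) := by
              rw [hgx, hAx, stmt9_grow_eq hγ0 hγ1 hᾱ hαmax]
            rcases le_or_gt L₀ 0 with hc | hc
            · exact Or.inl (by rw [hUx, hA1, hwe, if_neg (by omega)])
            · refine Or.inr ⟨by omega, ?_⟩
              have hmL : (L₀.toNat:ℤ) = L₀ := Int.toNat_of_nonneg (by omega)
              have hxD : x ∈ D k L₀.toNat := by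
                refine ⟨by omega, ?_⟩
                rw [hAx, hmL]
              have hmax : max j' (L₀-1) = L₀ - 1 := max_eq_right (by omega)
              have hU1 : U (k+1) x ≤ c2 L₀.toNat := by
                rw [hUx, hA1, hwe, hmax, hc2def]
                simp only
                rw [hmL]
                split
                · exact le_refl _
                · exact (zpow_pos hρ0 _).le
              refine le_trans hU1 ?_
              rw [htdef]
              simp only
              rw [Set.indicator_of_mem
                (show x ∈ D k L₀.toNat ∩ G k from Set.mem_inter hxD hgx), mul_one]
              have := mul_nonneg (hc1p L₀.toNat).le
                (Set.indicator_nonneg (fun (_:Ω) _ => (zero_le_one (α := ℝ)))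
                  (s := D k L₀.toNat ∩ S k) x)
              linarith
        have hind : (0:ℝ) ≤ Set.indicator Tk (U k) x :=
          Set.indicator_nonneg (fun y _ => hUnn k y) x
        rcases hconc with h0 | ⟨hm0, hle⟩
        · rw [h0]
          exact hVnn x
        · have hmk : L₀.toNat ∈ Finset.range (k+1) := by
            rw [Finset.mem_range]
            omega
          have h1 : t L₀.toNat x ≤ ∑ L ∈ Finset.range (k+1), t L x :=
            Finset.single_le_sum (fun L _ => htnn L x) hmk
          rw [hVdef]
          simp only
          linarith
    -- integrability
    have htint : ∀ L, Integrable (t L) μ := by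
      intro L
      refine Integrable.add ?_ ?_
      · exact ((integrable_const 1).indicator ((hDm k L).inter (hSm k))).const_mul _
      · exact ((integrable_const 1).indicator ((hDm k L).inter (hGm k))).const_mul _
    have hindint : Integrable (Set.indicator Tk (U k)) μ := (hUint k).indicator hTkm
    have hsumint : Integrable (fun x => ∑ L ∈ Finset.range (k+1), t L x) μ :=
      integrable_finset_sum _ fun L _ => htint L
    have hVint : Integrable V μ := hindint.add hsumint
    -- integral of V
    have hVeq : ∫ x, V x ∂μ = (∫ x, Set.indicator Tk (U k) x ∂μ)
        + ∑ L ∈ Finset.range (k+1),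
          (c1 L * (μ (D k L ∩ S k)).toReal + c2 L * (μ (D k L ∩ G k)).toReal) := by
      rw [hVdef]
      simp only
      rw [integral_add hindint hsumint, integral_finset_sum _ fun L _ => htint L]
      congr 1
      refine Finset.sum_congr rfl fun L _ => ?_
      rw [htdef]
      simp only
      rw [integral_add (((integrable_const 1).indicator ((hDm k L).inter (hSm k))).const_mul _)
        (((integrable_const 1).indicator ((hDm k L).inter (hGm k))).const_mul _),
        integral_const_mul, integral_const_mul,
        integral_indicator_const _ ((hDm k L).inter (hSm k)),
        integral_indicator_const _ ((hDm k L).inter (hGm k))]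
      simp [measureReal_def]
    -- per-level bound on the summands
    have hLbd : ∀ L, c1 L * (μ (D k L ∩ S k)).toReal + c2 L * (μ (D k L ∩ G k)).toReal
        ≤ ρ ^ (L:ℤ) * (μ (D k L)).toReal := by
      intro L
      have hsub : D k L ⊆ {x | k < T x ∧ A k x ≤ ᾱ} := by
        intro x hx
        refine ⟨hx.1, ?_⟩
        rw [hx.2]
        calc ᾱ * γ ^ (L:ℤ) ≤ ᾱ * 1 :=
          mul_le_mul_of_nonneg_left (zpow_le_one₀ hγ0 hγ1.le (by positivity)) hᾱ.le
        _ = ᾱ := mul_one ᾱ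
      have hGbd : p * (μ (D k L)).toReal ≤ (μ (D k L ∩ G k)).toReal :=
        stmt9_cond_bound μ F k (G k) (hGm k) {x | k < T x ∧ A k x ≤ ᾱ}
          (hcond k) (D k L) (hDmF k L) hsub
      have hdisj : D k L ∩ S k ∩ G k = ∅ := by
        rw [Set.eq_empty_iff_forall_notMem]
        intro x hx
        exact hSG k x (hsub hx.1.1).2 hx.1.2 hx.2
      obtain ⟨hS1, hS2⟩ := stmt9_shrink_bound μ (G k) (S k) (D k L) (hGm k) (hDm k L) hdisj hGbd
      have hid : p * c2 L + q * c1 L = ρ ^ (L:ℤ) := by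
        rw [hc1def, hc2def]
        simp only
        rw [zpow_sub_one₀ (ne_of_gt hρ0), zpow_add_one₀ (ne_of_gt hρ0)]
        have e1 : p * ρ⁻¹ = q := by
          rw [hρdef, inv_div]
          field_simp
        have e2 : q * ρ = p := by
          rw [hρdef]
          field_simp
        calc p * (ρ^(L:ℤ) * ρ⁻¹) + q * (ρ^(L:ℤ) * ρ) = ρ^(L:ℤ) * (p * ρ⁻¹) + ρ^(L:ℤ) * (q * ρ) := by
              ring
        _ = ρ^(L:ℤ) * q + ρ^(L:ℤ) * p := by rw [e1, e2]
        _ = ρ^(L:ℤ) * (q + p) := by ring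
        _ = ρ^(L:ℤ) := by rw [hq]; ring
      have hc21 : c2 L ≤ c1 L := by
        rw [hc1def, hc2def]
        exact zpow_le_zpow_right₀ hρ1.le (by omega)
      have hms : (0:ℝ) ≤ (μ (D k L ∩ S k)).toReal := ENNReal.toReal_nonneg
      have hmg : (0:ℝ) ≤ (μ (D k L ∩ G k)).toReal := ENNReal.toReal_nonneg
      have hqid : 1 - p = q := by rw [hq]
      rw [hqid] at hS1
      have e3 : c1 L * (μ (D k L ∩ S k)).toReal + c2 L * (μ (D k L ∩ G k)).toReal
          = c2 L * ((μ (D k L ∩ S k)).toReal + (μ (D k L ∩ G k)).toReal)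
            + (c1 L - c2 L) * (μ (D k L ∩ S k)).toReal := by ring
      have e4 : c2 L * ((μ (D k L ∩ S k)).toReal + (μ (D k L ∩ G k)).toReal)
          ≤ c2 L * (μ (D k L)).toReal := mul_le_mul_of_nonneg_left hS2 (hc2p L).le
      have e5 : (c1 L - c2 L) * (μ (D k L ∩ S k)).toReal
          ≤ (c1 L - c2 L) * (q * (μ (D k L)).toReal) :=
        mul_le_mul_of_nonneg_left hS1 (sub_nonneg.2 hc21)
      have e6 : c2 L * (μ (D k L)).toReal + (c1 L - c2 L) * (q * (μ (D k L)).toReal)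
          = ρ ^ (L:ℤ) * (μ (D k L)).toReal := by
        linear_combination (μ (D k L)).toReal * hid - (c2 L * (μ (D k L)).toReal) * hq
      linarith
    -- lower representation of ∫ U k
    set Wf : Ω → ℝ := fun x => Set.indicator Tk (U k) x
      + ∑ L ∈ Finset.Icc 1 k, ρ ^ (L:ℤ) * Set.indicator (D k L) (fun _ => (1:ℝ)) x with hWdef
    have hWU : ∀ᵐ x ∂μ, Wf x ≤ U k x := by
      filter_upwards [hP] with x hx
      obtain ⟨L₀, hAx, hL₀k⟩ := hlev x hx k
      by_cases hxT : T x ≤ k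
      · have hz : ∀ L ∈ Finset.Icc 1 k,
            ρ ^ (L:ℤ) * Set.indicator (D k L) (fun _ => (1:ℝ)) x = 0 := by
          intro L _
          rw [Set.indicator_of_notMem (fun hc => absurd hc.1 (by omega))]
          ring
        rw [hWdef]
        simp only
        rw [Finset.sum_eq_zero hz, Set.indicator_of_mem (show x ∈ Tk from hxT), add_zero]
      · have e2 : min (T x) k = k := by omega
        have hUkx : U k x = w (A k x) := by
          show w (A (min (T x) k) x) = _
          rw [e2]
        have hind0 : Set.indicator Tk (U k) x = 0 := Set.indicator_of_notMem (show x ∉ Tk from hxT) _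
        rcases le_or_gt L₀ 0 with hc | hc
        · have hz : ∀ L ∈ Finset.Icc 1 k,
              ρ ^ (L:ℤ) * Set.indicator (D k L) (fun _ => (1:ℝ)) x = 0 := by
            intro L hL
            rw [Finset.mem_Icc] at hL
            rw [Set.indicator_of_notMem, mul_zero]
            intro hcm
            have := stmt9_inj hγ0 hγ1 hᾱ (hAx.symm.trans hcm.2)
            omega
          rw [hWdef]
          simp only
          rw [Finset.sum_eq_zero hz, hind0, add_zero]
          exact hUnn k x
        · have hmL : (L₀.toNat:ℤ) = L₀ := Int.toNat_of_nonneg (by omega)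
          have hxD : x ∈ D k L₀.toNat := by
            refine ⟨by omega, ?_⟩
            rw [hAx, hmL]
          have hmem : L₀.toNat ∈ Finset.Icc 1 k := by
            rw [Finset.mem_Icc]
            omega
          have hsum : ∑ L ∈ Finset.Icc 1 k, ρ ^ (L:ℤ) * Set.indicator (D k L) (fun _ => (1:ℝ)) x
              = ρ ^ L₀ := by
            rw [Finset.sum_eq_single L₀.toNat]
            · rw [Set.indicator_of_mem hxD, mul_one, hmL]
            · intro b _ hb
              rw [Set.indicator_of_notMem, mul_zero]
              intro hcm
              have := stmt9_inj hγ0 hγ1 hᾱ (hAx.symm.trans hcm.2)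
              omega
            · intro hb
              exact absurd hmem hb
          rw [hWdef]
          simp only
          rw [hsum, hind0, zero_add, hUkx, hAx, hwe, if_pos (by omega)]
    have hWint : Integrable Wf μ := by
      refine hindint.add (integrable_finset_sum _ fun L _ => ?_)
      exact ((integrable_const 1).indicator (hDm k L)).const_mul _
    have hWeq : ∫ x, Wf x ∂μ = (∫ x, Set.indicator Tk (U k) x ∂μ)
        + ∑ L ∈ Finset.Icc 1 k, ρ ^ (L:ℤ) * (μ (D k L)).toReal := by
      rw [hWdef]
      simp only
      rw [integral_add hindint (integrable_finset_sum _ fun L _ =>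
          ((integrable_const 1).indicator (hDm k L)).const_mul _),
        integral_finset_sum _ fun L _ => ((integrable_const 1).indicator (hDm k L)).const_mul _]
      congr 1
      refine Finset.sum_congr rfl fun L _ => ?_
      rw [integral_const_mul, integral_indicator_const _ (hDm k L)]
      simp [measureReal_def]
    -- assemble
    have hsplit : Finset.range (k+1) = insert 0 (Finset.Icc 1 k) := by
      ext a
      simp only [Finset.mem_range, Finset.mem_insert, Finset.mem_Icc]
      omega
    have hm01 : (μ (D k 0)).toReal ≤ 1 := by
      have h := prob_le_one (μ := μ) (s := D k 0)
      simpa using ENNReal.toReal_mono ENNReal.one_ne_top h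
    calc ∫ x, U (k+1) x ∂μ ≤ ∫ x, V x ∂μ := integral_mono_ae (hUint (k+1)) hVint hUV
    _ = (∫ x, Set.indicator Tk (U k) x ∂μ)
        + ∑ L ∈ Finset.range (k+1),
          (c1 L * (μ (D k L ∩ S k)).toReal + c2 L * (μ (D k L ∩ G k)).toReal) := hVeq
    _ ≤ (∫ x, Set.indicator Tk (U k) x ∂μ)
        + ∑ L ∈ Finset.range (k+1), ρ ^ (L:ℤ) * (μ (D k L)).toReal := by
          have := Finset.sum_le_sum (fun L (_ : L ∈ Finset.range (k+1)) => hLbd L)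
          linarith
    _ = (∫ x, Set.indicator Tk (U k) x ∂μ)
        + (ρ ^ ((0:ℕ):ℤ) * (μ (D k 0)).toReal
          + ∑ L ∈ Finset.Icc 1 k, ρ ^ (L:ℤ) * (μ (D k L)).toReal) := by
          rw [hsplit, Finset.sum_insert (by simp)]
    _ ≤ (∫ x, Wf x ∂μ) + 1 := by
          rw [hWeq]
          have : ρ ^ ((0:ℕ):ℤ) * (μ (D k 0)).toReal ≤ 1 := by
            simpa using hm01
          linarith
    _ ≤ (∫ x, U k x ∂μ) + 1 := by
          have := integral_mono_ae hWint (hUint k) hWU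
          linarith
  -- expectation bound
  have hEU : ∀ k, ∫ x, U k x ∂μ ≤ (k:ℝ) := by
    intro k
    induction k with
    | zero =>
      have h0 : ∀ x, U 0 x = 0 := by
        intro x
        show w (A (min (T x) 0) x) = 0
        rw [Nat.min_zero, hA0 x, hwe, if_neg (by omega)]
      have h1 : (fun x => U 0 x) = fun _ => (0:ℝ) := funext h0
      rw [h1, integral_zero]
      norm_num
    | succ k ih =>
      calc ∫ x, U (k+1) x ∂μ ≤ (∫ x, U k x ∂μ) + 1 := hkey k
      _ ≤ (k:ℝ) + 1 := by linarith
      _ = ((k+1:ℕ):ℝ) := by push_cast; ring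
  -- per-step probability bound
  have hprob : ∀ k l : ℕ, 1 ≤ l → (μ (E k l)).toReal ≤ (k:ℝ) * (q/p)^l := by
    intro k l hl
    have hρl : (0:ℝ) < ρ ^ (l:ℤ) := zpow_pos hρ0 _
    have h1 : ∀ x, Set.indicator (E k l) (fun _ => ρ^(l:ℤ)) x ≤ U k x := by
      intro x
      by_cases hx : x ∈ E k l
      · rw [Set.indicator_of_mem hx]
        have hxT : k ≤ T x := hx.1
        have e1 : min (T x) k = k := by omega
        show ρ^(l:ℤ) ≤ w (A (min (T x) k) x)
        rw [e1, hx.2, hwe, if_pos (by exact_mod_cast hl)]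
      · rw [Set.indicator_of_notMem hx]
        exact hUnn k x
    have h2 : ∫ x, Set.indicator (E k l) (fun _ => ρ^(l:ℤ)) x ∂μ
        = ρ^(l:ℤ) * (μ (E k l)).toReal := by
      rw [integral_indicator_const _ (hEm k l)]
      simp [mul_comm, measureReal_def]
    have h3 : ρ^(l:ℤ) * (μ (E k l)).toReal ≤ (k:ℝ) := by
      rw [← h2]
      refine le_trans (integral_mono_ae ?_ (hUint k) (Filter.Eventually.of_forall h1)) (hEU k)
      exact ((integrable_const _).indicator (hEm k l))
    have hqpl : (q/p)^l = (ρ^(l:ℤ))⁻¹ := by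
      rw [hρdef, zpow_natCast, ← inv_pow, inv_div]
    rw [hqpl, ← div_eq_mul_inv, le_div_iff₀ hρl]
    linarith [h3]
  -- the constant is nonnegative
  set c : ℝ := 2 * Real.sqrt (p*q) / (1 - 2 * Real.sqrt (p*q))^2 with hcdef
  have hc0 : 0 ≤ c := by
    rw [hcdef]
    have := Real.sqrt_nonneg (p*q)
    positivity
  set g : Ω → ℝ := fun x => (n:ℝ) * oc ᾱ + ∑ l ∈ Finset.Icc 1 n,
    oc (ᾱ * γ ^ l) * (∑ k ∈ Finset.Icc 1 n, Set.indicator (E k l) (fun _ => (1:ℝ)) x) with hgdef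
  have hocᾱ : 0 ≤ oc ᾱ := hoc0 ᾱ hᾱ
  have hocl : ∀ l : ℕ, 0 ≤ oc (ᾱ * γ ^ l) := fun l => hoc0 _ (by positivity)
  -- pointwise domination
  have hpt : ∀ᵐ x ∂μ, (∑ k ∈ Finset.Icc 1 (min (T x) n), oc (A k x)) ≤ g x := by
    filter_upwards [hP] with x hx
    have hper : ∀ k ∈ Finset.Icc 1 (min (T x) n), oc (A k x) ≤ oc ᾱ
        + ∑ l ∈ Finset.Icc 1 n, oc (ᾱ * γ ^ l) * Set.indicator (E k l) (fun _ => (1:ℝ)) x := by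
      intro k hk
      rw [Finset.mem_Icc] at hk
      obtain ⟨L₀, hAx, hL₀k⟩ := hlev x hx k
      have hsnn : 0 ≤ ∑ l ∈ Finset.Icc 1 n,
          oc (ᾱ * γ ^ l) * Set.indicator (E k l) (fun _ => (1:ℝ)) x :=
        Finset.sum_nonneg fun l _ => mul_nonneg (hocl l)
          (Set.indicator_nonneg (fun _ _ => zero_le_one) x)
      rcases le_or_gt L₀ 0 with hc' | hc'
      · have h1 : oc (A k x) ≤ oc ᾱ := by
          refine hocmono ᾱ (A k x) hᾱ ?_
          rw [hAx]
          exact stmt9_ge_of_nonpos hγ0 hγ1 hᾱ hc'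
        linarith
      · have hmL : (L₀.toNat:ℤ) = L₀ := Int.toNat_of_nonneg (by omega)
        have hkn : k ≤ n := le_trans hk.2 (min_le_right _ _)
        have hkT : k ≤ T x := le_trans hk.2 (min_le_left _ _)
        have hxE : x ∈ E k L₀.toNat := ⟨hkT, by rw [hAx, hmL]⟩
        have hmem : L₀.toNat ∈ Finset.Icc 1 n := by
          rw [Finset.mem_Icc]
          omega
        have hAval : A k x = ᾱ * γ ^ (L₀.toNat : ℕ) := by
          rw [hAx, ← zpow_natCast γ L₀.toNat, hmL]
        have hsingle := Finset.single_le_sum (f := fun l =>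
            oc (ᾱ * γ ^ l) * Set.indicator (E k l) (fun _ => (1:ℝ)) x)
          (fun l _ => mul_nonneg (hocl l)
            (Set.indicator_nonneg (fun _ _ => zero_le_one) x)) hmem
        have hsingle' : oc (ᾱ * γ ^ (L₀.toNat : ℕ))
            * Set.indicator (E k L₀.toNat) (fun _ => (1:ℝ)) x
            ≤ ∑ l ∈ Finset.Icc 1 n,
              oc (ᾱ * γ ^ l) * Set.indicator (E k l) (fun _ => (1:ℝ)) x := hsingle
        rw [Set.indicator_of_mem hxE, mul_one] at hsingle'
        rw [hAval]
        linarith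
    calc ∑ k ∈ Finset.Icc 1 (min (T x) n), oc (A k x)
        ≤ ∑ k ∈ Finset.Icc 1 (min (T x) n), (oc ᾱ
          + ∑ l ∈ Finset.Icc 1 n, oc (ᾱ * γ ^ l) * Set.indicator (E k l) (fun _ => (1:ℝ)) x) :=
        Finset.sum_le_sum hper
    _ ≤ ∑ k ∈ Finset.Icc 1 n, (oc ᾱ
          + ∑ l ∈ Finset.Icc 1 n, oc (ᾱ * γ ^ l) * Set.indicator (E k l) (fun _ => (1:ℝ)) x) := by
        refine Finset.sum_le_sum_of_subset_of_nonneg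
          (Finset.Icc_subset_Icc_right (min_le_right _ _)) (fun k _ _ => ?_)
        refine add_nonneg hocᾱ (Finset.sum_nonneg fun l _ =>
          mul_nonneg (hocl l) (Set.indicator_nonneg (fun _ _ => zero_le_one) x))
    _ = g x := by
        rw [hgdef]
        simp only
        rw [Finset.sum_add_distrib, Finset.sum_const, Nat.card_Icc, Finset.sum_comm]
        congr 1
        · simp [nsmul_eq_mul]
        · refine Finset.sum_congr rfl fun l _ => ?_
          rw [Finset.mul_sum]
  -- integrability of g
  have hgint : Integrable g μ := by
    rw [hgdef]
    refine (integrable_const _).add (integrable_finset_sum _ fun l _ => ?_)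
    exact (integrable_finset_sum _ fun k _ => (integrable_const 1).indicator (hEm k l)).const_mul _
  -- integral of g
  have hgeq : ∫ x, g x ∂μ = (n:ℝ) * oc ᾱ + ∑ l ∈ Finset.Icc 1 n,
      oc (ᾱ * γ ^ l) * (∑ k ∈ Finset.Icc 1 n, (μ (E k l)).toReal) := by
    rw [hgdef]
    simp only
    rw [integral_add (integrable_const _) (integrable_finset_sum _ fun l _ =>
      (integrable_finset_sum _ fun k _ => (integrable_const 1).indicator (hEm k l)).const_mul _)]
    congr 1
    · simp
    rw [integral_finset_sum _ fun l _ =>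
      (integrable_finset_sum _ fun k _ => (integrable_const 1).indicator (hEm k l)).const_mul _]
    refine Finset.sum_congr rfl fun l _ => ?_
    rw [integral_const_mul,
      integral_finset_sum _ fun k _ => (integrable_const 1).indicator (hEm k l)]
    congr 1
    refine Finset.sum_congr rfl fun k _ => ?_
    rw [integral_indicator_const _ (hEm k l)]
    simp [measureReal_def]
  -- per-level sum bound
  have hsl : ∀ l ∈ Finset.Icc 1 n, ∑ k ∈ Finset.Icc 1 n, (μ (E k l)).toReal
      ≤ (n:ℝ) * min 1 ((n:ℝ) * (q/p)^l + c * (2*q)^l) := by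
    intro l hl
    rw [Finset.mem_Icc] at hl
    have b1 : ∑ k ∈ Finset.Icc 1 n, (μ (E k l)).toReal ≤ (n:ℝ) * 1 := by
      calc ∑ k ∈ Finset.Icc 1 n, (μ (E k l)).toReal ≤ ∑ k ∈ Finset.Icc 1 n, (1:ℝ) := by
            refine Finset.sum_le_sum fun k _ => ?_
            have h := prob_le_one (μ := μ) (s := E k l)
            simpa using ENNReal.toReal_mono ENNReal.one_ne_top h
      _ = (n:ℝ) * 1 := by
            rw [Finset.sum_const, Nat.card_Icc]
            simp [nsmul_eq_mul]
    have b2 : ∑ k ∈ Finset.Icc 1 n, (μ (E k l)).toReal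
        ≤ (n:ℝ) * ((n:ℝ) * (q/p)^l + c * (2*q)^l) := by
      have h2q : (0:ℝ) ≤ c * (2*q)^l := mul_nonneg hc0 (by positivity)
      calc ∑ k ∈ Finset.Icc 1 n, (μ (E k l)).toReal
          ≤ ∑ k ∈ Finset.Icc 1 n, (n:ℝ) * (q/p)^l := by
            refine Finset.sum_le_sum fun k hk => ?_
            rw [Finset.mem_Icc] at hk
            refine le_trans (hprob k l hl.1) ?_
            have hkn : (k:ℝ) ≤ n := by exact_mod_cast hk.2
            have hql : (0:ℝ) ≤ (q/p)^l := by positivity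
            nlinarith
      _ = (n:ℝ) * ((n:ℝ) * (q/p)^l) := by
            rw [Finset.sum_const, Nat.card_Icc]
            simp [nsmul_eq_mul]
      _ ≤ (n:ℝ) * ((n:ℝ) * (q/p)^l + c * (2*q)^l) := by
            have hn0 : (0:ℝ) ≤ n := by positivity
            nlinarith
    have hmin : (n:ℝ) * min 1 ((n:ℝ) * (q/p)^l + c * (2*q)^l)
        = min ((n:ℝ)*1) ((n:ℝ) * ((n:ℝ) * (q/p)^l + c * (2*q)^l)) := by
      simpa using smul_min_of_nonneg (by positivity : (0:ℝ) ≤ (n:ℝ)) 1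
        ((n:ℝ) * (q/p)^l + c * (2*q)^l)
    rw [hmin]
    exact le_min b1 b2
  -- final chain
  have hfin : ∑ l ∈ Finset.Icc 1 n, oc (ᾱ * γ ^ l) * (∑ k ∈ Finset.Icc 1 n, (μ (E k l)).toReal)
      ≤ (n:ℝ) * ∑ l ∈ Finset.Icc 1 n,
          (min 1 ((n:ℝ) * (q/p)^l + c * (2*q)^l)) * oc (ᾱ * γ ^ l) := by
    rw [Finset.mul_sum]
    refine Finset.sum_le_sum fun l hl => ?_
    calc oc (ᾱ * γ ^ l) * (∑ k ∈ Finset.Icc 1 n, (μ (E k l)).toReal)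
        ≤ oc (ᾱ * γ ^ l) * ((n:ℝ) * min 1 ((n:ℝ) * (q/p)^l + c * (2*q)^l)) :=
          mul_le_mul_of_nonneg_left (hsl l hl) (hocl l)
    _ = (n:ℝ) * ((min 1 ((n:ℝ) * (q/p)^l + c * (2*q)^l)) * oc (ᾱ * γ ^ l)) := by ring
  have hLHS : ∫ x, (∑ k ∈ Finset.Icc 1 (min (T x) n), oc (A k x)) ∂μ ≤ ∫ x, g x ∂μ := by
    refine integral_mono_of_nonneg ?_ hgint hpt
    exact Filter.Eventually.of_forall fun x => Finset.sum_nonneg fun k _ => hoc0 _ (hpos k x)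
  rw [hgeq] at hLHS
  calc ∫ x, (∑ k ∈ Finset.Icc 1 (min (T x) n), oc (A k x)) ∂μ ≤ _ := hLHS
  _ ≤ (n:ℝ) * oc ᾱ + (n:ℝ) * ∑ l ∈ Finset.Icc 1 n,
        (min 1 ((n:ℝ) * (q/p)^l + c * (2*q)^l)) * oc (ᾱ * γ ^ l) := by linarith [hfin]
  _ = _ := by ring
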